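/- Let f be a multilinear function on ℝ^N and let x ∈ [−1/2, 1/2]^N. Then there exists a probability distribution R_x over restrictions ρ = (S, w) (with S ⊆ [N] and w ∈ {−1,1}^{[N]∖S}) such that for every y ∈ ℝ^N: f(x + y) − f(x) = E_{ρ ~ R_x}[ f_ρ(2·y) − f_ρ(0) ]. -/

import Mathlib

open MeasureTheory ProbabilityTheory Finset

noncomputable section

/-- Bit strings of length `n`; there are `N = 2^n` of them. -/
abbrev BV (n : ℕ) := Fin n → Bool

/-- Inner product (mod nothing, just the count) of two bit strings. -/
def bip {n : ℕ} (x y : BV n) : ℕ := (Finset.univ.filter fun i => x i && y i).card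

/-- The `N × N` normalized Walsh-Hadamard matrix, `H_{x,y} = (-1)^{⟨x,y⟩} / √N`. -/
def Had (n : ℕ) : Matrix (BV n) (BV n) ℝ :=
  Matrix.of fun x y => (-1 : ℝ) ^ bip x y / Real.sqrt (2 ^ n)

/-- `ε = 1 / (C ln N)` with `N = 2^n`. -/
def eps (C : ℝ) (n : ℕ) : ℝ := 1 / (C * Real.log (2 ^ n))

/-- The Gaussian vector `X` with i.i.d. `N(0, ε)` coordinates. -/
def gaussVec (C : ℝ) (n : ℕ) : Measure (BV n → ℝ) :=
  Measure.pi fun _ => gaussianReal 0 (eps C n).toNNReal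

/-- The distribution `G'` of `Z = (X, Y∘Y - ε·𝟙)` with `Y = H·X`, packed as a
function on `BV n ⊕ BV n` (first `N` coordinates are `X`, last `N` are `Y∘Y - ε`). -/
def Gmeas' (C : ℝ) (n : ℕ) : Measure (BV n ⊕ BV n → ℝ) :=
  (gaussVec C n).map fun X => Sum.elim X fun i => ((Had n).mulVec X i) ^ 2 - eps C n

/-- Truncation to `[-1, 1]`. -/
def trnc (a : ℝ) : ℝ := min 1 (max (-1) a)

/-- Randomized rounding of `a` to `±1`: output `1` with probability `(1 + trnc a)/2`
and `-1` with probability `(1 - trnc a)/2`. -/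
def roundM (a : ℝ) : Measure ℝ :=
  ((1 + trnc a) / 2).toNNReal • Measure.dirac 1 +
    ((1 - trnc a) / 2).toNNReal • Measure.dirac (-1)

/-- The distribution `D` on `{±1}^{2N}`: sample `z ~ G'` and round each coordinate
independently. -/
def Dmeas (C : ℝ) (n : ℕ) : Measure (BV n ⊕ BV n → ℝ) :=
  (Gmeas' C n).bind fun z => Measure.pi fun i => roundM (z i)

/-- `F : ℝ^ι → ℝ` is multilinear if `F z = Σ_S F̂(S) ∏_{i ∈ S} z_i`. -/
def IsMultilinear {ι : Type*} [Fintype ι] [DecidableEq ι] (F : (ι → ℝ) → ℝ) : Prop :=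
  ∃ c : Finset ι → ℝ, ∀ z, F z = ∑ S : Finset ι, c S * ∏ i ∈ S, z i

/-- The Fourier coefficient `F̂(S)` of `F` (over the hypercube `{±1}^ι`); for a
multilinear `F` these are precisely its multilinear coefficients. -/
def mlCoeff {ι : Type*} [Fintype ι] [DecidableEq ι] (F : (ι → ℝ) → ℝ) (S : Finset ι) : ℝ :=
  (∑ z : ι → Bool, F (fun i => if z i then 1 else -1) * ∏ i ∈ S, (if z i then (1 : ℝ) else -1)) /
    2 ^ Fintype.card ι

/-- `L_{1,2}(F) = Σ_{|S| = 2} |F̂(S)|`. -/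
def L12 {ι : Type*} [Fintype ι] [DecidableEq ι] (F : (ι → ℝ) → ℝ) : ℝ :=
  ∑ S ∈ Finset.univ.filter (fun S : Finset ι => S.card = 2), |mlCoeff F S|

/-- The restriction `F_ρ` of `F` under `ρ = (S, w)`: coordinates outside `S` are
fixed to the values of `w`. -/
def restrictML {ι : Type*} [DecidableEq ι] (F : (ι → ℝ) → ℝ) (S : Finset ι)
    (w : ι → ℝ) : (ι → ℝ) → ℝ :=
  fun y => F fun i => if i ∈ S then y i else w i

/-- `φ(X, Y) = (1/N) Σ_i (Σ_j H_{ij} X_j)² Y_i`. -/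
def phi (n : ℕ) (X Y : BV n → ℝ) : ℝ :=
  (∑ i, ((Had n).mulVec X i) ^ 2 * Y i) / 2 ^ n

/-- The multilinear part `φ_{i≠j}(X, Y) = (1/N) Σ_i Σ_{j ≠ k} H_{ij} H_{ik} X_j X_k Y_i`. -/
def phiOff (n : ℕ) (X Y : BV n → ℝ) : ℝ :=
  (∑ i, ∑ j, ∑ k ∈ Finset.univ \ {j}, Had n i j * Had n i k * X j * X k * Y i) / 2 ^ n

/-- The Fourier coefficient `f̂(x) = 2^{-n} Σ_y f(y) (-1)^{⟨x,y⟩}` of `f : {0,1}^n → {±1}`. -/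
def hatF (n : ℕ) (f : BV n → ℝ) (x : BV n) : ℝ :=
  (∑ y, f y * (-1 : ℝ) ^ bip x y) / 2 ^ n

section stmt9aux

lemma stmt9_key {N : ℕ} (h : Fin N → Bool × Bool → ℝ) :
    ∑ ρ : (Fin N → Bool) × (Fin N → Bool), ∏ i, h i (ρ.1 i, ρ.2 i)
      = ∏ i, ∑ p : Bool × Bool, h i p := by
  rw [Fintype.prod_sum]
  exact Fintype.sum_equiv (Equiv.arrowProdEquivProdArrow (Fin N) (fun _ => Bool) (fun _ => Bool)).symm _ _
    (fun ρ => rfl)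

variable {N : ℕ} (x : Fin N → ℝ)

/-- per-coordinate weight -/
noncomputable def stmt9w (i : Fin N) : Bool × Bool → ℝ := fun p =>
  if p.1 then 1/4 else if p.2 then (1 + 2 * x i)/4 else (1 - 2 * x i)/4

lemma stmt9w_nonneg (hx : ∀ i, |x i| ≤ 1/2) (i : Fin N) (p : Bool × Bool) :
    0 ≤ stmt9w x i p := by
  have h1 := abs_le.1 (hx i)
  unfold stmt9w
  split_ifs <;> linarith [h1.1, h1.2]

lemma stmt9w_sum (i : Fin N) : ∑ p : Bool × Bool, stmt9w x i p = 1 := by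
  simp [stmt9w, Fintype.sum_prod_type]
  ring

lemma stmt9w_exp (i : Fin N) (v : ℝ) :
    ∑ p : Bool × Bool, stmt9w x i p * (if p.1 then v else if p.2 then 1 else -1)
      = x i + v / 2 := by
  simp [stmt9w, Fintype.sum_prod_type]
  ring

/-- The main expectation computation. -/
lemma stmt9_exp (S : Finset (Fin N)) (v : Fin N → ℝ) :
    ∑ ρ : (Fin N → Bool) × (Fin N → Bool),
        (∏ i, stmt9w x i (ρ.1 i, ρ.2 i)) *
          ∏ i ∈ S, (if ρ.1 i then v i else if ρ.2 i then (1:ℝ) else -1)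
      = ∏ i ∈ S, (x i + v i / 2) := by
  set h : Fin N → Bool × Bool → ℝ := fun i p =>
    stmt9w x i p * if i ∈ S then (if p.1 then v i else if p.2 then (1:ℝ) else -1) else 1
    with hh
  calc ∑ ρ : (Fin N → Bool) × (Fin N → Bool),
        (∏ i, stmt9w x i (ρ.1 i, ρ.2 i)) *
          ∏ i ∈ S, (if ρ.1 i then v i else if ρ.2 i then (1:ℝ) else -1)
      = ∑ ρ : (Fin N → Bool) × (Fin N → Bool), ∏ i, h i (ρ.1 i, ρ.2 i) := by
        refine Finset.sum_congr rfl fun ρ _ => ?_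
        rw [hh]
        simp only
        rw [Finset.prod_mul_distrib]
        congr 1
        rw [Finset.prod_ite_mem, Finset.univ_inter]
    _ = ∏ i, ∑ p : Bool × Bool, h i p := stmt9_key h
    _ = ∏ i ∈ S, (x i + v i / 2) := by
        rw [← Finset.univ_inter S, ← Finset.prod_ite_mem]
        refine Finset.prod_congr rfl fun i _ => ?_
        by_cases hi : i ∈ S
        · simp only [hh, hi, if_true]
          rw [stmt9w_exp]
        · simp only [hh, hi, if_false, mul_one]
          rw [stmt9w_sum]

lemma stmt9_W_sum : ∑ ρ : (Fin N → Bool) × (Fin N → Bool),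
    (∏ i, stmt9w x i (ρ.1 i, ρ.2 i)) = 1 := by
  have := stmt9_exp x (∅ : Finset (Fin N)) 0
  simpa using this

lemma stmt9_lin (c : Finset (Fin N) → ℝ) (v : Fin N → ℝ) :
    ∑ ρ : (Fin N → Bool) × (Fin N → Bool),
        (∏ i, stmt9w x i (ρ.1 i, ρ.2 i)) *
          ∑ S : Finset (Fin N), c S *
            ∏ i ∈ S, (if ρ.1 i then v i else if ρ.2 i then (1:ℝ) else -1)
      = ∑ S : Finset (Fin N), c S * ∏ i ∈ S, (x i + v i / 2) := by
  simp_rw [Finset.mul_sum]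
  rw [Finset.sum_comm]
  refine Finset.sum_congr rfl fun S _ => ?_
  simp_rw [mul_left_comm _ (c S), ← Finset.mul_sum, stmt9_exp]

end stmt9aux

/-- Let `f` be multilinear on `ℝ^N` and `x ∈ [-1/2, 1/2]^N`. Then there is
a probability distribution `R_x` over restrictions `ρ = (S, w)` (encoded as a pair of
Boolean vectors: `S = {i | ρ.1 i}` and `w i = ±1` according to `ρ.2 i`, relevant only
off `S`) such that for every `y ∈ ℝ^N`,
`f (x + y) - f x = E_{ρ ~ R_x}[f_ρ(2 y) - f_ρ(0)]`. -/
theorem stmt9 (N : ℕ) (f : (Fin N → ℝ) → ℝ) (hf : IsMultilinear f)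
    (x : Fin N → ℝ) (hx : ∀ i, |x i| ≤ 1 / 2) :
    ∃ μ : PMF ((Fin N → Bool) × (Fin N → Bool)),
      ∀ y : Fin N → ℝ,
        f (x + y) - f x =
          ∑ ρ : (Fin N → Bool) × (Fin N → Bool), (μ ρ).toReal *
            (f (fun i => if ρ.1 i then 2 * y i else if ρ.2 i then 1 else -1) -
             f (fun i => if ρ.1 i then 0 else if ρ.2 i then 1 else -1)) := by
  obtain ⟨c, hc⟩ := hf
  set W : (Fin N → Bool) × (Fin N → Bool) → ℝ :=
    fun ρ => ∏ i, stmt9w x i (ρ.1 i, ρ.2 i) with hW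
  have hWnn : ∀ ρ, 0 ≤ W ρ := fun ρ =>
    Finset.prod_nonneg fun i _ => stmt9w_nonneg x hx i _
  have hsum1 : ∑ ρ : (Fin N → Bool) × (Fin N → Bool),
      ENNReal.ofReal (W ρ) = 1 := by
    rw [← ENNReal.ofReal_sum_of_nonneg (fun ρ _ => hWnn ρ), hW, stmt9_W_sum,
      ENNReal.ofReal_one]
  refine ⟨PMF.ofFintype (fun ρ => ENNReal.ofReal (W ρ)) hsum1, fun y => ?_⟩
  have hto : ∀ ρ, ((PMF.ofFintype (fun ρ => ENNReal.ofReal (W ρ)) hsum1) ρ).toReal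
      = W ρ := fun ρ => by
    rw [PMF.ofFintype_apply, ENNReal.toReal_ofReal (hWnn ρ)]
  simp_rw [hto, hc, mul_sub, Finset.sum_sub_distrib]
  have hA : ∑ ρ : (Fin N → Bool) × (Fin N → Bool),
      W ρ * ∑ S : Finset (Fin N), c S *
        ∏ i ∈ S, (if ρ.1 i then 2 * y i else if ρ.2 i then (1:ℝ) else -1)
      = ∑ S : Finset (Fin N), c S * ∏ i ∈ S, (x i + y i) := by
    have := stmt9_lin x c (fun i => 2 * y i)
    rw [hW]
    convert this using 3 with S
    · exact Finset.prod_congr rfl fun i _ => by ring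
  have hB : ∑ ρ : (Fin N → Bool) × (Fin N → Bool),
      W ρ * ∑ S : Finset (Fin N), c S *
        ∏ i ∈ S, (if ρ.1 i then (0:ℝ) else if ρ.2 i then (1:ℝ) else -1)
      = ∑ S : Finset (Fin N), c S * ∏ i ∈ S, x i := by
    have := stmt9_lin x c (fun _ => 0)
    rw [hW]
    convert this using 3 with S
    · exact Finset.prod_congr rfl fun i _ => by norm_num
  rw [hA, hB]
  rfl
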